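/- For any matrices U, V ∈ R^{n×r}, one has ⟨V Uᵀ U − U Vᵀ V, U − V⟩ ≤ ‖U Vᵀ‖₂ · ‖U − V‖_F², where ‖·‖₂ denotes the spectral norm. -/

import Mathlib

open Matrix BigOperators
open scoped RealInnerProductSpace

/-- Frobenius norm of a real matrix. -/
noncomputable def frob {n m : ℕ} (A : Matrix (Fin n) (Fin m) ℝ) : ℝ :=
  Real.sqrt (∑ i, ∑ j, (A i j)^2)

/-- Spectral (ℓ2 operator) norm of a square real matrix. -/
noncomputable def specNorm {n : ℕ} (A : Matrix (Fin n) (Fin n) ℝ) : ℝ :=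
  ‖(Matrix.toEuclideanCLM (𝕜 := ℝ) A : EuclideanSpace ℝ (Fin n) →L[ℝ] EuclideanSpace ℝ (Fin n))‖

/-- Trace inner product ⟨A, B⟩ = trace(Aᵀ B). -/
noncomputable def inprod {n m : ℕ} (A B : Matrix (Fin n) (Fin m) ℝ) : ℝ :=
  (Aᵀ * B).trace

-- Lemma 1 : tr(X*X) ≤ tr(Xᵀ*X)
lemma trace_sq_le {n : ℕ} (X : Matrix (Fin n) (Fin n) ℝ) :
    (X * X).trace ≤ (Xᵀ * X).trace := by
  have h1 : (X * X).trace = ∑ i, ∑ j, X i j * X j i := by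
    simp [Matrix.trace, Matrix.mul_apply, Matrix.diag]
  have h2 : (Xᵀ * X).trace = ∑ i, ∑ j, X j i * X j i := by
    simp [Matrix.trace, Matrix.mul_apply, Matrix.diag, Matrix.transpose_apply]
  rw [h1, h2]
  have key : ∑ i, ∑ j, (X i j * X j i + X i j * X j i) ≤
      ∑ i, ∑ j, (X i j * X i j + X j i * X j i) := by
    refine Finset.sum_le_sum fun i _ => Finset.sum_le_sum fun j _ => ?_
    nlinarith [sq_nonneg (X i j - X j i)]
  have hs : ∑ i, ∑ j, X i j * X i j = ∑ i, ∑ j, X j i * X j i := by rw [Finset.sum_comm]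
  simp only [Finset.sum_add_distrib] at key
  linarith

-- Lemma 2 : tr(Dᵀ X D) ≤ specNorm X * ∑ entries²
lemma trace_conj_le {n r : ℕ} (X : Matrix (Fin n) (Fin n) ℝ) (D : Matrix (Fin n) (Fin r) ℝ) :
    (Dᵀ * X * D).trace ≤ specNorm X * ∑ i, ∑ j, (D i j)^2 := by
  have hcol : ∀ j, (Dᵀ * X * D) j j = ∑ i, D i j * (X *ᵥ (fun i => D i j)) i := by
    intro j
    simp only [Matrix.mul_apply, Matrix.mulVec, dotProduct, Matrix.transpose_apply,
      Finset.mul_sum, Finset.sum_mul]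
    rw [Finset.sum_comm]
    exact Finset.sum_congr rfl fun a _ => Finset.sum_congr rfl fun b _ => by ring
  have hbound : ∀ j : Fin r, ∑ i, D i j * (X *ᵥ (fun i => D i j)) i ≤
      specNorm X * ∑ i, (D i j)^2 := by
    intro j
    set x : Fin n → ℝ := fun i => D i j with hx
    set y : EuclideanSpace ℝ (Fin n) := (WithLp.equiv 2 (Fin n → ℝ)).symm x with hy
    have hinner : ∑ i, x i * (X *ᵥ x) i =
        ⟪y, (Matrix.toEuclideanCLM (𝕜 := ℝ) X) y⟫ := by
      rw [hy, WithLp.equiv_symm_apply, Matrix.toEuclideanCLM_toLp, EuclideanSpace.inner_toLp_toLp]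
      simp [dotProduct, mul_comm]
    have hnorm : ‖y‖^2 = ∑ i, x i ^ 2 := by
      rw [hy]
      rw [sq, ← real_inner_self_eq_norm_mul_norm, WithLp.equiv_symm_apply, EuclideanSpace.inner_toLp_toLp]
      simp [dotProduct, sq]
    calc ∑ i, x i * (X *ᵥ x) i = ⟪y, (Matrix.toEuclideanCLM (𝕜 := ℝ) X) y⟫ := hinner
      _ ≤ ‖y‖ * ‖(Matrix.toEuclideanCLM (𝕜 := ℝ) X) y‖ := real_inner_le_norm _ _
      _ ≤ ‖y‖ * (specNorm X * ‖y‖) := by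
          gcongr
          exact ((Matrix.toEuclideanCLM (𝕜 := ℝ) X)).le_opNorm y
      _ = specNorm X * ‖y‖^2 := by ring
      _ = specNorm X * ∑ i, x i ^ 2 := by rw [hnorm]
  have htr : (Dᵀ * X * D).trace = ∑ j, ∑ i, D i j * (X *ᵥ (fun i => D i j)) i := by
    simp only [Matrix.trace, Matrix.diag]
    exact Finset.sum_congr rfl fun j _ => hcol j
  rw [htr]
  have hswap : ∑ i, ∑ j, (D i j)^2 = ∑ j, ∑ i, (D i j)^2 := by rw [Finset.sum_comm]
  rw [hswap, Finset.mul_sum]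
  exact Finset.sum_le_sum fun j _ => hbound j

theorem inner_product_upper_bound {n r : ℕ} (U V : Matrix (Fin n) (Fin r) ℝ) :
    inprod (V * Uᵀ * U - U * Vᵀ * V) (U - V) ≤
      specNorm (U * Vᵀ) * frob (U - V) ^ 2 := by
  set X := U * Vᵀ with hX
  set D := U - V with hD
  have hfrob : frob D ^ 2 = ∑ i, ∑ j, (D i j)^2 := by
    rw [frob, Real.sq_sqrt]
    positivity
  have hid : inprod (V * Uᵀ * U - U * Vᵀ * V) (U - V) =
      (Dᵀ * X * D).trace + (X * X).trace - (Xᵀ * X).trace := by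
    rw [inprod, hX, hD]
    simp only [Matrix.transpose_sub, Matrix.transpose_mul, Matrix.transpose_transpose,
      Matrix.sub_mul, Matrix.mul_sub, Matrix.trace_sub, Matrix.trace_add]
    have e1 : (Vᵀ * (U * Vᵀ) * U).trace = (U * Vᵀ * (U * Vᵀ)).trace := by
      rw [Matrix.trace_mul_comm, ← Matrix.mul_assoc]
    have e2 : (Vᵀ * (V * Uᵀ) * U).trace = (V * Uᵀ * (U * Vᵀ)).trace := by
      rw [Matrix.trace_mul_comm, Matrix.trace_mul_comm (V * Uᵀ) (U * Vᵀ), Matrix.mul_assoc]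
    have e3 : (Vᵀ * (V * Uᵀ) * V).trace = (Vᵀ * (U * Vᵀ) * V).trace := by
      conv_lhs => rw [← Matrix.trace_transpose]
      simp [Matrix.transpose_mul, Matrix.mul_assoc]
    linarith
  rw [hid, hfrob]
  have h1 := trace_sq_le X
  have h2 := trace_conj_le X D
  linarith
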